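/- Let μ be a partition and N ≥ 1, and use the total order <₂ on the super alphabet A. Then Σ_σ (−1)^{m(σ)} q^{inv(σ)} t^{p(σ)+maj(σ)} x^{|σ|}, summed over ALL super fillings σ : dg(μ) → A with |σ(u)| ≤ N for all u, equals the same sum restricted to those super fillings σ satisfying |σ(u)| ≥ i for every cell u = (i,j) ∈ dg(μ). -/

import Mathlib

open Finset MvPolynomial

namespace HHL

/-! ### Diagrams, fillings and the statistics `inv` and `maj` -/

/-- The cells of the Young diagram of the partition `μ` (given as the list of
its row lengths `μ_1, μ_2, …`); the cell `(i,j)` lies in row `i` (from the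
bottom, French style) and column `j`, with `1 ≤ i ≤ ℓ(μ)`, `1 ≤ j ≤ μ_i`. -/
def cells (μ : List ℕ) : Finset (ℕ × ℕ) :=
  (Finset.Icc 1 μ.length ×ˢ Finset.Icc 1 (μ.foldr max 0)).filter
    (fun u => u.2 ≤ μ.getD (u.1 - 1) 0)

/-- `μ` is a partition: a weakly decreasing list of positive integers. -/
def IsPartitionList (μ : List ℕ) : Prop := μ.Pairwise (· ≥ ·) ∧ ∀ x ∈ μ, 0 < x

/-- The arm of a cell: the number of cells strictly to its right in its row. -/
def arm (μ : List ℕ) (u : ℕ × ℕ) : ℕ :=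
  ((cells μ).filter (fun v => v.1 = u.1 ∧ u.2 < v.2)).card

/-- The leg of a cell: the number of cells strictly above it in its column. -/
def leg (μ : List ℕ) (u : ℕ × ℕ) : ℕ :=
  ((cells μ).filter (fun v => v.2 = u.2 ∧ u.1 < v.1)).card

/-- `u` precedes `v` in the reading order (row by row from the top row down,
left to right within each row). -/
def ReadBefore (u v : ℕ × ℕ) : Prop := v.1 < u.1 ∨ (u.1 = v.1 ∧ u.2 < v.2)

instance (u v : ℕ × ℕ) : Decidable (ReadBefore u v) := by
  unfold ReadBefore; infer_instance

/-- `u` and `v` attack each other and `u` precedes `v` in reading order: either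
they are in the same row with `u` to the left, or `u` is one row above `v` and
strictly to its right. -/
def AttackOrd (u v : ℕ × ℕ) : Prop :=
  (u.1 = v.1 ∧ u.2 < v.2) ∨ (u.1 = v.1 + 1 ∧ v.2 < u.2)

instance (u v : ℕ × ℕ) : Decidable (AttackOrd u v) := by
  unfold AttackOrd; infer_instance

/-- `u` and `v` attack each other. -/
def Attack (u v : ℕ × ℕ) : Prop := AttackOrd u v ∨ AttackOrd v u

instance (u v : ℕ × ℕ) : Decidable (Attack u v) := by
  unfold Attack; infer_instance

section Stats

variable {V : Type} (μ : List ℕ) (Ind : V → V → Prop) [DecidableRel Ind] (σ : ℕ × ℕ → V)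

/-- The set `Inv(σ)` of inversions of a filling `σ`, recorded as ordered pairs
`(u,v)` with `u` attacking `v`, `u` preceding `v` in reading order, and
`I(σ(u),σ(v)) = 1`; here `Ind x y` means `I(x,y) = 1` (for ordinary fillings
`Ind x y ↔ x > y`). -/
def invPairs : Finset ((ℕ × ℕ) × (ℕ × ℕ)) :=
  ((cells μ) ×ˢ (cells μ)).filter fun p => AttackOrd p.1 p.2 ∧ Ind (σ p.1) (σ p.2)

/-- The descent set `Des(σ)`: cells `u = (i+1,j)` with `v = (i,j) ∈ dg(μ)` and
`I(σ(u),σ(v)) = 1`. -/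
def desCells : Finset (ℕ × ℕ) :=
  (cells μ).filter fun u => (u.1 - 1, u.2) ∈ cells μ ∧ Ind (σ u) (σ (u.1 - 1, u.2))

/-- `maj(σ) = Σ_{u ∈ Des(σ)} (leg(u) + 1)`. -/
def majStat : ℕ := ∑ u ∈ desCells μ Ind σ, (leg μ u + 1)

/-- `inv(σ) = |Inv(σ)| − Σ_{u ∈ Des(σ)} arm(u)`. -/
def invStat : ℕ := (invPairs μ Ind σ).card - ∑ u ∈ desCells μ Ind σ, arm μ u

end Stats

/-- For ordinary (positive-integer valued) fillings, `I(x,y) = 1` iff `x > y`. -/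
def natInd : ℕ → ℕ → Prop := fun x y => y < x

instance : DecidableRel natInd := fun _ _ => by unfold natInd; infer_instance

/-- Extend a function defined on the cells of `μ` to a total function. -/
def extendF {V : Type} (μ : List ℕ) (d : V) (f : {u // u ∈ cells μ} → V) : ℕ × ℕ → V :=
  fun u => if h : u ∈ cells μ then f ⟨u, h⟩ else d

/-- A filling of `dg(μ)` with entries in `{1, …, N}`, encoded by a function to
`Fin N` (value `k` means the entry `k + 1`), as a total function `ℕ × ℕ → ℕ`. -/
def natFill (μ : List ℕ) {N : ℕ} (f : {u // u ∈ cells μ} → Fin N) : ℕ × ℕ → ℕ :=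
  extendF μ 0 fun u => (f u).val + 1

/-- Haglund's combinatorial formula
`C_μ(x_1,…,x_N;q,t) = Σ_σ q^{inv(σ)} t^{maj(σ)} x^σ`, a polynomial in
`x_1,…,x_N` with coefficients in `ℤ[q,t]`, where `q = C (X 0)`, `t = C (X 1)`. -/
noncomputable def Cmu (μ : List ℕ) (N : ℕ) :
    MvPolynomial (Fin N) (MvPolynomial (Fin 2) ℤ) :=
  ∑ f : {u // u ∈ cells μ} → Fin N,
    C ((X 0 : MvPolynomial (Fin 2) ℤ) ^ invStat μ natInd (natFill μ f) *
       (X 1 : MvPolynomial (Fin 2) ℤ) ^ majStat μ natInd (natFill μ f)) *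
    ∏ u, X (f u)

/-! ### Skew diagrams and LLT polynomials -/

/-- A pair of partitions `(λ, μ)` with `μ ⊆ λ`, representing the skew diagram
`λ∖μ`. -/
def IsSkewPair (p : List ℕ × List ℕ) : Prop :=
  IsPartitionList p.1 ∧ IsPartitionList p.2 ∧ ∀ i, p.2.getD i 0 ≤ p.1.getD i 0

/-- The cells of the skew diagram `λ∖μ`. -/
def skewCells (p : List ℕ × List ℕ) : Finset (ℕ × ℕ) := cells p.1 \ cells p.2

/-- The content `c(u) = i − j` of the cell `u = (i,j)`. -/
def content (u : ℕ × ℕ) : ℤ := (u.1 : ℤ) - (u.2 : ℤ)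

/-- The disjoint union of the cells of a tuple of skew diagrams. -/
abbrev TDom {k : ℕ} (ν : Fin k → List ℕ × List ℕ) : Type :=
  Σ i : Fin k, {u // u ∈ skewCells (ν i)}

/-- `f` (with `f ⟨i,u⟩` the entry of the `i`-th tableau at the cell `u`) is a
tuple of semistandard Young tableaux: entries weakly increasing along each row
and strictly increasing up each column. -/
def IsSSYTtuple {k : ℕ} (ν : Fin k → List ℕ × List ℕ) (f : TDom ν → ℕ) : Prop :=
  ∀ i : Fin k, ∀ u v : {u // u ∈ skewCells (ν i)},
    (u.1.1 = v.1.1 ∧ u.1.2 ≤ v.1.2 → f ⟨i, u⟩ ≤ f ⟨i, v⟩) ∧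
    (u.1.2 = v.1.2 ∧ u.1.1 < v.1.1 → f ⟨i, u⟩ < f ⟨i, v⟩)

instance {k : ℕ} (ν : Fin k → List ℕ × List ℕ) (f : TDom ν → ℕ) :
    Decidable (IsSSYTtuple ν f) := by unfold IsSSYTtuple; infer_instance

/-- The number of inversions of a tuple of tableaux: pairs of entries
`T^(i)(u) > T^(j)(v)` with either `i < j` and `c(u) = c(v)`, or `i > j` and
`c(u) = c(v) + 1`. -/
def lltInv {k : ℕ} (ν : Fin k → List ℕ × List ℕ) (f : TDom ν → ℕ) : ℕ :=
  (Finset.univ.filter fun p : TDom ν × TDom ν =>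
    ((p.1.1 < p.2.1 ∧ content p.1.2.1 = content p.2.2.1) ∨
     (p.2.1 < p.1.1 ∧ content p.1.2.1 = content p.2.2.1 + 1)) ∧
    f p.2 < f p.1).card

/-- The LLT polynomial `G_ν(x_1,…,x_N;q) = Σ_T q^{inv(T)} x^T` in `N`
variables, with coefficients in `ℤ[q]` (`q = C Polynomial.X`); tableau entries
in `{1,…,N}` are encoded by `Fin N` (value `k` means entry `k + 1`). -/
noncomputable def llt {k : ℕ} (ν : Fin k → List ℕ × List ℕ) (N : ℕ) :
    MvPolynomial (Fin N) (Polynomial ℤ) :=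
  ∑ f ∈ Finset.univ.filter (fun f : TDom ν → Fin N =>
      IsSSYTtuple ν (fun a => (f a).val + 1)),
    C (Polynomial.X ^ lltInv ν (fun a => (f a).val + 1)) * ∏ a, X (f a)

/-! ### The super alphabet -/

/-- The super alphabet `A = {1, 1̄, 2, 2̄, …}`: the letter `(a, b)` has absolute
value `a + 1` and is negative (barred) iff `b = true`. -/
abbrev SLetter : Type := ℕ × Bool

/-- The absolute value of a super letter. -/
def sAbs (x : SLetter) : ℕ := x.1 + 1

/-- The ordering `<₁`: `1 < 1̄ < 2 < 2̄ < ⋯`. -/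
def lt1 (x y : SLetter) : Prop :=
  x.1 < y.1 ∨ (x.1 = y.1 ∧ x.2 = false ∧ y.2 = true)

instance : DecidableRel lt1 := fun _ _ => by unfold lt1; infer_instance

/-- The ordering `<₂`: `1 < 2 < 3 < ⋯ < 3̄ < 2̄ < 1̄`. -/
def lt2 (x y : SLetter) : Prop :=
  (x.2 = false ∧ y.2 = false ∧ x.1 < y.1) ∨ (x.2 = false ∧ y.2 = true) ∨
    (x.2 = true ∧ y.2 = true ∧ y.1 < x.1)

instance : DecidableRel lt2 := fun _ _ => by unfold lt2; infer_instance

/-- Given a total order `lt` on the super alphabet, `IndOf lt x y` holds iff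
`I(x,y) = 1`, i.e. `x > y`, or `x = y` is a negative letter. -/
def IndOf (lt : SLetter → SLetter → Prop) (x y : SLetter) : Prop :=
  lt y x ∨ (x = y ∧ x.2 = true)

instance (lt : SLetter → SLetter → Prop) [DecidableRel lt] : DecidableRel (IndOf lt) :=
  fun _ _ => by unfold IndOf; infer_instance

/-- A super filling of `dg(μ)` with letters of absolute value at most `N`, as a
total function (the value `(a, b)` with `a : Fin N` means the letter of
absolute value `a + 1`, barred iff `b`). -/
def superFill (μ : List ℕ) {N : ℕ} (f : {u // u ∈ cells μ} → Fin N × Bool) :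
    ℕ × ℕ → SLetter :=
  extendF μ (0, false) fun u => ((f u).1.val, (f u).2)

/-- A super filling with entries in `{1, 1̄}` (`f u = true` means entry `1̄`). -/
def boolFill (μ : List ℕ) (f : {u // u ∈ cells μ} → Bool) : ℕ × ℕ → SLetter :=
  extendF μ (0, false) fun u => ((0 : ℕ), f u)

/-- `m(σ)`: the number of negative entries of a super filling. -/
def negCount (μ : List ℕ) (σ : ℕ × ℕ → SLetter) : ℕ :=
  ((cells μ).filter fun u => (σ u).2 = true).card

/-- `p(σ)`: the number of positive entries of a super filling. -/
def posCount (μ : List ℕ) (σ : ℕ × ℕ → SLetter) : ℕ :=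
  ((cells μ).filter fun u => (σ u).2 = false).card

/-- A super filling is non-attacking if entries in attacking cells have
distinct absolute values. -/
def NonAttacking (μ : List ℕ) (σ : ℕ × ℕ → SLetter) : Prop :=
  ∀ u ∈ cells μ, ∀ v ∈ cells μ, Attack u v → sAbs (σ u) ≠ sAbs (σ v)

instance (μ : List ℕ) (σ : ℕ × ℕ → SLetter) : Decidable (NonAttacking μ σ) := by
  unfold NonAttacking; infer_instance

/-! ### Conjugate partitions, ribbons, connectivity -/

/-- `conj μ j = μ'_j`, the number of rows of `μ` of length at least `j`. -/
def conj (μ : List ℕ) (j : ℕ) : ℕ :=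
  ((Finset.range μ.length).filter fun i => j ≤ μ.getD i 0).card

/-- The transpose `μ'` of a partition, as a list. -/
def conjList (μ : List ℕ) : List ℕ :=
  (List.range (μ.foldr max 0)).map fun j => conj μ (j + 1)

/-- Transpose of a skew shape: `λ∖μ ↦ λ'∖μ'`. -/
def transposePair (p : List ℕ × List ℕ) : List ℕ × List ℕ :=
  (conjList p.1, conjList p.2)

/-- Two cells are adjacent (share an edge). -/
def AdjCell (u v : ℕ × ℕ) : Prop :=
  (u.1 = v.1 ∧ (u.2 = v.2 + 1 ∨ v.2 = u.2 + 1)) ∨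
  (u.2 = v.2 ∧ (u.1 = v.1 + 1 ∨ v.1 = u.1 + 1))

/-- A set of cells is connected (any two cells are joined by a path of
edge-adjacent cells inside the set). -/
def ConnSet (s : Finset (ℕ × ℕ)) : Prop :=
  ∀ u ∈ s, ∀ v ∈ s, Relation.ReflTransGen (fun a b => a ∈ s ∧ b ∈ s ∧ AdjCell a b) u v

/-- A set of cells contains no 2×2 block. -/
def No2x2 (s : Finset (ℕ × ℕ)) : Prop :=
  ¬ ∃ i j, (i, j) ∈ s ∧ (i + 1, j) ∈ s ∧ (i, j + 1) ∈ s ∧ (i + 1, j + 1) ∈ s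

/-! ### Reading words and cocharge -/

/-- Boolean comparison realizing the reading order. -/
def readLe (u v : ℕ × ℕ) : Bool :=
  decide (v.1 < u.1) || (decide (u.1 = v.1) && decide (u.2 ≤ v.2))

/-- The reading word of a filling `σ` of `dg(μ)`: its entries listed in reading
order. -/
noncomputable def readingWord (μ : List ℕ) (σ : ℕ × ℕ → ℕ) : List ℕ :=
  ((cells μ).toList.mergeSort readLe).map σ

/-- Boolean comparison for the cocharge-word ordering of the cells: entries of
`σ` decreasing and, within constant segments of `σ`, cells in decreasing
reading order. -/
def cwordLe (σ : ℕ × ℕ → ℕ) (u v : ℕ × ℕ) : Bool :=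
  decide (σ v < σ u) ||
    (decide (σ u = σ v) &&
      (decide (u.1 < v.1) || (decide (u.1 = v.1) && decide (v.2 ≤ u.2))))

/-- The cocharge word of a filling: the row indices of the cells, listed so that
the entries are decreasing, with ties broken by decreasing reading order. -/
noncomputable def cword (μ : List ℕ) (σ : ℕ × ℕ → ℕ) : List ℕ :=
  ((cells μ).toList.mergeSort (cwordLe σ)).map Prod.fst

/-- Cocharge of a word that is a permutation of `{1,…,n}`:
`Σ_{i ∈ D(w⁻¹)} (n − i)`, where `i ∈ D(w⁻¹)` iff `i + 1` occurs before `i`. -/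
def cochargePerm (w : List ℕ) : ℕ :=
  ∑ i ∈ Finset.Icc 1 (w.length - 1),
    if w.idxOf (i + 1) < w.idxOf i then w.length - i else 0

/-- The (0-based) positions of the letter `a` in `w`. -/
def letterPositions (w : List ℕ) (a : ℕ) : Finset ℕ :=
  (Finset.range w.length).filter fun k => w.getD k 0 = a

/-- The position `k_i` for the letter `a`: the rightmost occurrence of `a`
strictly to the left of `bound` if there is one, otherwise the rightmost
occurrence of `a`. -/
def choosePos (w : List ℕ) (a : ℕ) (bound : Option ℕ) : Option ℕ :=
  match bound with
  | none => (letterPositions w a).max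
  | some b =>
      let s := (letterPositions w a).filter (· < b)
      if s.Nonempty then s.max else (letterPositions w a).max

/-- `posListAux w i = [k_i, k_{i-1}, …, k_1]` (as options). -/
def posListAux (w : List ℕ) : ℕ → List (Option ℕ)
  | 0 => []
  | i + 1 =>
      let rest := posListAux w i
      choosePos w (i + 1) (rest.headD none) :: rest

/-- The set `S = {k_1, …, k_l}` of positions extracted in the cocharge
recursion, where `l` is the largest letter of `w`. -/
def extractSet (w : List ℕ) : Finset ℕ :=
  ((posListAux w (w.foldr max 0)).filterMap id).toFinset

/-- The subword of `w` at the positions in `S` (in increasing position order). -/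
def subwordOn (w : List ℕ) (S : Finset ℕ) : List ℕ :=
  ((List.range w.length).filter fun k => decide (k ∈ S)).map fun k => w.getD k 0

/-- The subword of `w` at the positions *not* in `S`. -/
def subwordOff (w : List ℕ) (S : Finset ℕ) : List ℕ :=
  ((List.range w.length).filter fun k => decide (k ∉ S)).map fun k => w.getD k 0

/-- Fuelled cocharge recursion: `cocharge w = cocharge y + cocharge z`, where
`y` is the extracted subword (a permutation of `{1,…,l}`) and `z` is the
complementary subword. -/
def cochargeAux : ℕ → List ℕ → ℕ
  | 0, _ => 0
  | fuel + 1, w =>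
      let S := extractSet w
      let z := subwordOff w S
      if z.length < w.length then cochargePerm (subwordOn w S) + cochargeAux fuel z
      else cochargePerm (subwordOn w S)

/-- The cocharge of a word of partition content. -/
def cocharge (w : List ℕ) : ℕ := cochargeAux w.length w

/-! ### Yamanouchi words and crystal operators -/

/-- A word is Yamanouchi if every final segment contains at least as many
letters `i` as letters `i + 1`, for every `i ≥ 1`. -/
def IsYamanouchi (w : List ℕ) : Prop :=
  ∀ k i, ((w.drop k).count (i + 2)) ≤ ((w.drop k).count (i + 1))

noncomputable instance : DecidablePred IsYamanouchi := fun _ => Classical.propDecidable _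

/-- The letters `i` (close, `false`) and `i + 1` (open, `true`) of `w`, as a
list of (position, is-open) tokens in position order. -/
def tokens (i : ℕ) (w : List ℕ) : List (ℕ × Bool) :=
  (List.range w.length).filterMap fun k =>
    if w.getD k 0 = i + 1 then some (k, true)
    else if w.getD k 0 = i then some (k, false) else none

/-- Stack pass performing the repeated deletion of adjacent matched pairs (an
`i + 1` immediately followed by an `i` in the current subword). The first
argument is the (reversed) list of surviving tokens so far. -/
def reduceTokens : List (ℕ × Bool) → List (ℕ × Bool) → List (ℕ × Bool)
  | acc, [] => acc.reverse
  | a :: acc', t :: rest =>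
      if a.2 ∧ ¬ t.2 then reduceTokens acc' rest
      else reduceTokens (t :: a :: acc') rest
  | [], t :: rest => reduceTokens [t] rest

/-- The surviving letters of `{i, i + 1}` in `w` after matched-pair deletion. -/
def survivors (i : ℕ) (w : List ℕ) : List (ℕ × Bool) := reduceTokens [] (tokens i w)

/-- The crystal raising operator `E_i` on words: change the first surviving
(unmatched) letter `i + 1` to `i`; `none` encodes `E_i w = 0`. -/
def crystalE (i : ℕ) (w : List ℕ) : Option (List ℕ) :=
  match (survivors i w).find? (fun t => t.2) with
  | none => none
  | some t => some (w.set t.1 i)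

/-! ### Straight-shape tableaux and Schur polynomials -/

/-- Semistandard tableau condition for a filling of the cells of `lam`. -/
def IsSSYTcells (lam : List ℕ) (T : {u // u ∈ cells lam} → ℕ) : Prop :=
  ∀ u v : {u // u ∈ cells lam},
    (u.1.1 = v.1.1 ∧ u.1.2 ≤ v.1.2 → T u ≤ T v) ∧
    (u.1.2 = v.1.2 ∧ u.1.1 < v.1.1 → T u < T v)

instance (lam : List ℕ) (T : {u // u ∈ cells lam} → ℕ) :
    Decidable (IsSSYTcells lam T) := by unfold IsSSYTcells; infer_instance

/-- The Schur polynomial `s_λ(x_1,…,x_N) = Σ_{T ∈ SSYT(λ), entries ≤ N} x^T`,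
with coefficients in a commutative ring `R`. -/
noncomputable def schurPoly (R : Type) [CommRing R] (lam : List ℕ) (N : ℕ) :
    MvPolynomial (Fin N) R :=
  ∑ T ∈ Finset.univ.filter (fun T : {u // u ∈ cells lam} → Fin N =>
      IsSSYTcells lam (fun u => (T u).val + 1)),
    ∏ u, X (T u)

/-- The decreasing list of parts of `p : Nat.Partition n`. -/
def partnList {n : ℕ} (p : n.Partition) : List ℕ :=
  (Multiset.sort p.parts (· ≤ ·)).reverse

section Cancellation

lemma getD_le_foldr_max : ∀ (l : List ℕ) (k : ℕ), l.getD k 0 ≤ l.foldr max 0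
  | [], k => by simp
  | a :: l, 0 => by simp
  | a :: l, k+1 => by
      simpa using Or.inr (getD_le_foldr_max l k)

lemma mem_cells_iff {μ : List ℕ} {i j : ℕ} :
    (i, j) ∈ cells μ ↔ 1 ≤ i ∧ i ≤ μ.length ∧ 1 ≤ j ∧ j ≤ μ.getD (i-1) 0 := by
  unfold cells
  simp only [Finset.mem_filter, Finset.mem_product, Finset.mem_Icc]
  constructor
  · rintro ⟨⟨⟨h1,h2⟩,h3,h4⟩,h5⟩; exact ⟨h1,h2,h3,h5⟩
  · rintro ⟨h1,h2,h3,h5⟩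
    exact ⟨⟨⟨h1,h2⟩,h3, le_trans h5 (getD_le_foldr_max μ _)⟩, h5⟩

lemma getD_anti {μ : List ℕ} (hμ : μ.Pairwise (· ≥ ·)) {k k' : ℕ} (h : k ≤ k') :
    μ.getD k' 0 ≤ μ.getD k 0 := by
  rcases lt_or_ge k' μ.length with h' | h'
  · have hk : k < μ.length := lt_of_le_of_lt h h'
    rcases eq_or_lt_of_le h with rfl | hlt
    · exact le_rfl
    · have := hμ.rel_get_of_lt (a := ⟨k, hk⟩) (b := ⟨k', h'⟩) (by simpa using hlt)
      rw [List.getD_eq_getElem?_getD, List.getD_eq_getElem?_getD,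
        List.getElem?_eq_getElem hk, List.getElem?_eq_getElem h']
      simpa [List.get_eq_getElem] using this
  · rw [List.getD_eq_default _ _ h']
    exact Nat.zero_le _

lemma cell_mono_row {μ : List ℕ} (hμ : IsPartitionList μ) {i' i j : ℕ}
    (h : (i, j) ∈ cells μ) (h1 : 1 ≤ i') (h2 : i' ≤ i) : (i', j) ∈ cells μ := by
  rw [mem_cells_iff] at h ⊢
  obtain ⟨a1, a2, a3, a4⟩ := h
  exact ⟨h1, le_trans h2 a2, a3, le_trans a4 (getD_anti hμ.1 (by omega))⟩

lemma ind_ge {x y : SLetter} (h : sAbs x ≤ sAbs y) :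
    IndOf lt2 x y ↔ x.2 = true := by
  obtain ⟨x1, x2⟩ := x; obtain ⟨y1, y2⟩ := y
  simp only [sAbs] at h
  cases x2 <;> cases y2 <;>
    simp [IndOf, lt2, Prod.ext_iff] <;> omega

lemma ind_gt {x y : SLetter} (h : sAbs x < sAbs y) :
    IndOf lt2 y x ↔ x.2 = false := by
  obtain ⟨x1, x2⟩ := x; obtain ⟨y1, y2⟩ := y
  simp only [sAbs] at h
  cases x2 <;> cases y2 <;>
    simp [IndOf, lt2, Prod.ext_iff] <;> omega

/-! ### Choice of the distinguished violating cell -/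

/-- Violating cells of a filling with absolute-value function `g`. -/
def vset (μ : List ℕ) (g : ℕ × ℕ → ℕ) : Finset (ℕ × ℕ) :=
  (cells μ).filter fun v => g v < v.1

/-- Minimal absolute value among violating cells. -/
def aOf (μ : List ℕ) (g : ℕ × ℕ → ℕ) : ℕ := WithTop.untopD 0 (((vset μ g).image g).min)

/-- Top row containing a violating cell of minimal absolute value. -/
def rOf (μ : List ℕ) (g : ℕ × ℕ → ℕ) : ℕ :=
  WithBot.unbotD 0 ((((vset μ g).filter fun v => g v = aOf μ g).image Prod.fst).max)

/-- Leftmost column in that row. -/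
def jOf (μ : List ℕ) (g : ℕ × ℕ → ℕ) : ℕ :=
  WithTop.untopD 0 ((((vset μ g).filter fun v => g v = aOf μ g ∧ v.1 = rOf μ g).image Prod.snd).min)

/-- The distinguished violating cell. -/
def cOf (μ : List ℕ) (g : ℕ × ℕ → ℕ) : ℕ × ℕ := (rOf μ g, jOf μ g)

lemma min_untop'_mem {s : Finset ℕ} (h : s.Nonempty) : WithTop.untopD 0 (s.min) ∈ s := by
  have : WithTop.untopD 0 (s.min) = s.min' h := by
    rw [← Finset.coe_min' h]; rfl
  rw [this]; exact s.min'_mem h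

lemma min_untop'_le {s : Finset ℕ} (h : s.Nonempty) {b : ℕ} (hb : b ∈ s) :
    WithTop.untopD 0 (s.min) ≤ b := by
  have : WithTop.untopD 0 (s.min) = s.min' h := by
    rw [← Finset.coe_min' h]; rfl
  rw [this]; exact s.min'_le b hb

lemma max_unbot'_mem {s : Finset ℕ} (h : s.Nonempty) : WithBot.unbotD 0 (s.max) ∈ s := by
  have : WithBot.unbotD 0 (s.max) = s.max' h := by
    rw [← Finset.coe_max' h]; rfl
  rw [this]; exact s.max'_mem h

lemma le_max_unbot' {s : Finset ℕ} (h : s.Nonempty) {b : ℕ} (hb : b ∈ s) :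
    b ≤ WithBot.unbotD 0 (s.max) := by
  have : WithBot.unbotD 0 (s.max) = s.max' h := by
    rw [← Finset.coe_max' h]; rfl
  rw [this]; exact s.le_max' b hb

lemma aOf_le {μ : List ℕ} {g : ℕ × ℕ → ℕ} (hne : (vset μ g).Nonempty)
    {v : ℕ × ℕ} (hv : v ∈ vset μ g) : aOf μ g ≤ g v :=
  min_untop'_le (hne.image g) (Finset.mem_image_of_mem g hv)

lemma vset_a_ne {μ : List ℕ} {g : ℕ × ℕ → ℕ} (hne : (vset μ g).Nonempty) :
    ((vset μ g).filter fun v => g v = aOf μ g).Nonempty := by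
  obtain ⟨v, hv, hgv⟩ := Finset.mem_image.mp (min_untop'_mem (hne.image g))
  exact ⟨v, Finset.mem_filter.mpr ⟨hv, hgv⟩⟩

lemma vset_ar_ne {μ : List ℕ} {g : ℕ × ℕ → ℕ} (hne : (vset μ g).Nonempty) :
    ((vset μ g).filter fun v => g v = aOf μ g ∧ v.1 = rOf μ g).Nonempty := by
  obtain ⟨v, hv, hv1⟩ :=
    Finset.mem_image.mp (max_unbot'_mem ((vset_a_ne hne).image Prod.fst))
  rw [Finset.mem_filter] at hv
  exact ⟨v, Finset.mem_filter.mpr ⟨hv.1, hv.2, hv1⟩⟩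

lemma cOf_mem {μ : List ℕ} {g : ℕ × ℕ → ℕ} (hne : (vset μ g).Nonempty) :
    cOf μ g ∈ vset μ g ∧ g (cOf μ g) = aOf μ g := by
  obtain ⟨v, hv, hv2⟩ :=
    Finset.mem_image.mp (min_untop'_mem ((vset_ar_ne hne).image Prod.snd))
  rw [Finset.mem_filter] at hv
  have : v = cOf μ g := by
    rw [Prod.ext_iff]; exact ⟨hv.2.2, hv2⟩
  rw [← this]; exact ⟨hv.1, hv.2.1⟩

lemma row_le_rOf {μ : List ℕ} {g : ℕ × ℕ → ℕ} (hne : (vset μ g).Nonempty)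
    {v : ℕ × ℕ} (hv : v ∈ vset μ g) (h : g v = aOf μ g) : v.1 ≤ rOf μ g :=
  le_max_unbot' ((vset_a_ne hne).image Prod.fst)
    (Finset.mem_image_of_mem Prod.fst (Finset.mem_filter.mpr ⟨hv, h⟩))

lemma jOf_le_col {μ : List ℕ} {g : ℕ × ℕ → ℕ} (hne : (vset μ g).Nonempty)
    {v : ℕ × ℕ} (hv : v ∈ vset μ g) (h1 : g v = aOf μ g)
    (h2 : v.1 = rOf μ g) : jOf μ g ≤ v.2 :=
  min_untop'_le ((vset_ar_ne hne).image Prod.snd)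
    (Finset.mem_image_of_mem Prod.snd (Finset.mem_filter.mpr ⟨hv, h1, h2⟩))

/-! ### The toggle involution -/

/-- Toggle the bar of the entry at cell `c`. -/
def toggleAt (μ : List ℕ) {N : ℕ} (f : {u // u ∈ cells μ} → Fin N × Bool)
    (c : ℕ × ℕ) : {u // u ∈ cells μ} → Fin N × Bool :=
  fun v => if (v : ℕ × ℕ) = c then ((f v).1, !(f v).2) else f v

/-- The absolute-value function of a super filling. -/
def gsf (μ : List ℕ) {N : ℕ} (f : {u // u ∈ cells μ} → Fin N × Bool) :
    ℕ × ℕ → ℕ := fun v => sAbs (superFill μ f v)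

/-- The sign-reversing involution: toggle the bar at the distinguished cell. -/
def invol (μ : List ℕ) {N : ℕ} (f : {u // u ∈ cells μ} → Fin N × Bool) :
    {u // u ∈ cells μ} → Fin N × Bool :=
  toggleAt μ f (cOf μ (gsf μ f))

lemma superFill_mem {μ : List ℕ} {N : ℕ} (f : {u // u ∈ cells μ} → Fin N × Bool)
    {v : ℕ × ℕ} (h : v ∈ cells μ) :
    superFill μ f v = ((f ⟨v, h⟩).1.val, (f ⟨v, h⟩).2) := by
  unfold superFill extendF
  rw [dif_pos h]

lemma superFill_not_mem {μ : List ℕ} {N : ℕ} (f : {u // u ∈ cells μ} → Fin N × Bool)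
    {v : ℕ × ℕ} (h : v ∉ cells μ) : superFill μ f v = ((0 : ℕ), false) := by
  unfold superFill extendF
  rw [dif_neg h]

lemma superFill_toggle_ne {μ : List ℕ} {N : ℕ} (f : {u // u ∈ cells μ} → Fin N × Bool)
    {c v : ℕ × ℕ} (hv : v ≠ c) :
    superFill μ (toggleAt μ f c) v = superFill μ f v := by
  by_cases h : v ∈ cells μ
  · rw [superFill_mem _ h, superFill_mem _ h]
    simp [toggleAt, hv]
  · rw [superFill_not_mem _ h, superFill_not_mem _ h]

lemma superFill_toggle_self {μ : List ℕ} {N : ℕ}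
    (f : {u // u ∈ cells μ} → Fin N × Bool) {c : ℕ × ℕ} (hc : c ∈ cells μ) :
    superFill μ (toggleAt μ f c) c
      = ((superFill μ f c).1, !(superFill μ f c).2) := by
  rw [superFill_mem _ hc, superFill_mem _ hc]
  simp [toggleAt]

lemma gsf_toggle (μ : List ℕ) {N : ℕ} (f : {u // u ∈ cells μ} → Fin N × Bool)
    (c : ℕ × ℕ) : gsf μ (toggleAt μ f c) = gsf μ f := by
  funext v
  by_cases hv : v = c
  · subst hv
    by_cases h : v ∈ cells μ
    · rw [gsf, gsf, superFill_toggle_self _ h]; rfl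
    · rw [gsf, gsf, superFill_not_mem _ h, superFill_not_mem _ h]
  · rw [gsf, gsf, superFill_toggle_ne _ hv]

lemma toggleAt_toggleAt (μ : List ℕ) {N : ℕ}
    (f : {u // u ∈ cells μ} → Fin N × Bool) (c : ℕ × ℕ) :
    toggleAt μ (toggleAt μ f c) c = f := by
  funext v
  by_cases hv : (v : ℕ × ℕ) = c <;> simp [toggleAt, hv]

lemma invol_invol (μ : List ℕ) {N : ℕ} (f : {u // u ∈ cells μ} → Fin N × Bool) :
    invol μ (invol μ f) = f := by
  unfold invol
  rw [gsf_toggle, toggleAt_toggleAt]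

lemma invol_fst (μ : List ℕ) {N : ℕ} (f : {u // u ∈ cells μ} → Fin N × Bool)
    (v : {u // u ∈ cells μ}) : (invol μ f v).1 = (f v).1 := by
  unfold invol toggleAt
  split <;> rfl

lemma invol_ne (μ : List ℕ) {N : ℕ} (f : {u // u ∈ cells μ} → Fin N × Bool)
    (hc : cOf μ (gsf μ f) ∈ cells μ) : invol μ f ≠ f := by
  intro h
  have := congrFun h ⟨cOf μ (gsf μ f), hc⟩
  unfold invol toggleAt at this
  rw [if_pos rfl] at this
  have := congrArg Prod.snd this
  simp at this

theorem key_toggle (μ : List ℕ) (hμ : IsPartitionList μ) {N : ℕ}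
    (f : {u // u ∈ cells μ} → Fin N × Bool)
    (hne : (vset μ (gsf μ f)).Nonempty)
    (hpos : (superFill μ f (cOf μ (gsf μ f))).2 = false) :
    negCount μ (superFill μ (invol μ f)) = negCount μ (superFill μ f) + 1 ∧
    posCount μ (superFill μ f) = posCount μ (superFill μ (invol μ f)) + 1 ∧
    majStat μ (IndOf lt2) (superFill μ (invol μ f)) =
      majStat μ (IndOf lt2) (superFill μ f) + 1 ∧
    invStat μ (IndOf lt2) (superFill μ (invol μ f)) =
      invStat μ (IndOf lt2) (superFill μ f) := by
  classical
  set g : ℕ × ℕ → ℕ := gsf μ f with hgdef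
  set σ : ℕ × ℕ → SLetter := superFill μ f with hσdef
  set σ' : ℕ × ℕ → SLetter := superFill μ (invol μ f) with hσ'def
  obtain ⟨hu₀v, hu₀a⟩ := cOf_mem hne
  set r : ℕ := rOf μ g with hrdef
  set j : ℕ := jOf μ g with hjdef
  set a : ℕ := aOf μ g with hadef
  have hu₀ : cOf μ g = (r, j) := rfl
  set u₀ : ℕ × ℕ := (r, j) with hu₀def
  rw [hu₀] at hu₀v hu₀a hpos
  have hu₀c : u₀ ∈ cells μ := (Finset.mem_filter.mp hu₀v).1
  have hgs : ∀ v, sAbs (σ v) = g v := fun _ => rfl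
  have hgs' : ∀ v, sAbs (σ' v) = g v := fun v => congrFun (gsf_toggle μ f (cOf μ (gsf μ f))) v
  have har : a < r := by
    have := (Finset.mem_filter.mp hu₀v).2
    rw [hu₀a] at this; exact this
  have ha1 : 1 ≤ a := by
    rw [← hu₀a, ← hgs u₀]; exact Nat.succ_le_succ (Nat.zero_le _)
  have hr2 : 2 ≤ r := by omega
  -- the letters at the distinguished cell
  have hx2 : (σ u₀).2 = false := hpos
  have hxa : sAbs (σ u₀) = a := by rw [hgs u₀, hu₀a]
  have hσ'ne : ∀ v : ℕ × ℕ, v ≠ u₀ → σ' v = σ v := by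
    intro v hv
    exact superFill_toggle_ne f (by rw [hu₀]; exact hv)
  have hx'2 : (σ' u₀).2 = true := by
    have : σ' u₀ = ((σ u₀).1, !(σ u₀).2) := by
      rw [hσ'def, hσdef]
      exact superFill_toggle_self f (hu₀ ▸ hu₀c)
    rw [this, hx2]; rfl
  have hx'a : sAbs (σ' u₀) = a := by rw [hgs' u₀, hu₀a]
  -- geometry of the diagram
  obtain ⟨-, hrL, hj1, hjμ⟩ := mem_cells_iff.mp hu₀c
  set w : ℕ × ℕ := (r + 1, j) with hwdef
  have hwne : w ≠ u₀ := by simp [hwdef, hu₀def, Prod.ext_iff]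
  have hv₀c : ((r - 1 : ℕ), j) ∈ cells μ := cell_mono_row hμ hu₀c (by omega) (by omega)
  have hv₀ne : ((r - 1 : ℕ), j) ≠ u₀ := by simp [hu₀def, Prod.ext_iff]; omega
  -- control of neighbours
  have nb_gt : ∀ v ∈ cells μ, (r < v.1 ∨ (v.1 = r ∧ v.2 < j)) → a < g v := by
    intro v hv hcase
    by_contra hle
    push_neg at hle
    by_cases hviol : g v < v.1
    · have hvv : v ∈ vset μ g := Finset.mem_filter.mpr ⟨hv, hviol⟩
      have h2 : g v = a := le_antisymm hle (aOf_le hne hvv)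
      have h3 : v.1 ≤ r := row_le_rOf hne hvv h2
      rcases hcase with h | ⟨h4, h5⟩
      · omega
      · have := jOf_le_col hne hvv h2 h4
        omega
    · push_neg at hviol
      rcases hcase with h | ⟨h4, _⟩ <;> omega
  have nb_ge : ∀ v ∈ cells μ, r - 1 ≤ v.1 → a ≤ g v := by
    intro v hv h
    by_cases hviol : g v < v.1
    · exact aOf_le hne (Finset.mem_filter.mpr ⟨hv, hviol⟩)
    · push_neg at hviol; omega
  -- counting lemmas
  have hu₀1 : u₀.1 = r := rfl
  have hu₀2 : u₀.2 = j := rfl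
  have hw1 : w.1 = r + 1 := rfl
  have hw2 : w.2 = j := rfl
  have hnegpos : negCount μ σ' = negCount μ σ + 1 ∧ posCount μ σ = posCount μ σ' + 1 := by
    constructor
    · have hset : (cells μ).filter (fun u => (σ' u).2 = true)
          = insert u₀ ((cells μ).filter fun u => (σ u).2 = true) := by
        ext v
        simp only [Finset.mem_filter, Finset.mem_insert]
        by_cases hv : v = u₀
        · subst hv
          simp [hu₀c, hx'2]
        · rw [hσ'ne v hv]
          constructor
          · rintro ⟨h1, h2⟩; exact Or.inr ⟨h1, h2⟩
          · rintro (rfl | ⟨h1, h2⟩)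
            · exact absurd rfl hv
            · exact ⟨h1, h2⟩
      rw [negCount, negCount, hset, Finset.card_insert_of_notMem]
      simp [hx2]
    · have hset : (cells μ).filter (fun u => (σ u).2 = false)
          = insert u₀ ((cells μ).filter fun u => (σ' u).2 = false) := by
        ext v
        simp only [Finset.mem_filter, Finset.mem_insert]
        by_cases hv : v = u₀
        · subst hv
          simp [hu₀c, hx2]
        · rw [hσ'ne v hv]
          constructor
          · rintro ⟨h1, h2⟩; exact Or.inr ⟨h1, h2⟩
          · rintro (rfl | ⟨h1, h2⟩)
            · exact absurd rfl hv
            · exact ⟨h1, h2⟩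
      rw [posCount, posCount, hset, Finset.card_insert_of_notMem]
      simp [hx'2]
  have hdes : desCells μ (IndOf lt2) σ' =
      insert u₀ ((desCells μ (IndOf lt2) σ).erase w) := by
    ext v
    simp only [desCells, Finset.mem_filter, Finset.mem_insert, Finset.mem_erase]
    by_cases hv : v = u₀
    · subst hv
      constructor
      · intro _; exact Or.inl rfl
      · intro _
        refine ⟨hu₀c, ?_, ?_⟩
        · show ((r - 1 : ℕ), j) ∈ cells μ
          exact hv₀c
        · show IndOf lt2 (σ' u₀) (σ' ((r - 1 : ℕ), j))
          rw [hσ'ne _ hv₀ne]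
          refine (ind_ge ?_).mpr hx'2
          rw [hx'a, hgs]
          exact nb_ge _ hv₀c (by omega)
    · by_cases hw : v = w
      · subst hw
        constructor
        · rintro ⟨hwc, hbc, hind⟩
          exfalso
          have hbw : ((w.1 - 1 : ℕ), w.2) = u₀ := by
            rw [Prod.ext_iff]; exact ⟨by omega, rfl⟩
          rw [hbw, hσ'ne w hwne] at hind
          have hgt : a < g w := nb_gt w hwc (Or.inl (by omega))
          have := (ind_gt (x := σ' u₀) (y := σ w)
            (by rw [hx'a, hgs]; exact hgt)).mp hind
          rw [hx'2] at this
          exact Bool.noConfusion this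
        · rintro (h | ⟨h, _⟩)
          · exact absurd h hwne
          · exact absurd rfl h
      · have hbne : v ∈ cells μ → ((v.1 - 1 : ℕ), v.2) ≠ u₀ := by
          intro hvc hb
          apply hw
          rw [Prod.ext_iff] at hb
          obtain ⟨hb1, hb2⟩ := hb
          obtain ⟨c1, -, -, -⟩ := mem_cells_iff.mp (show (v.1, v.2) ∈ cells μ from hvc)
          rw [Prod.ext_iff]
          rw [hu₀1] at hb1
          rw [hu₀2] at hb2
          exact ⟨by omega, by rw [hb2]⟩
        constructor
        · rintro ⟨h1, h2, h3⟩
          rw [hσ'ne v hv, hσ'ne _ (hbne h1)] at h3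
          exact Or.inr ⟨hw, h1, h2, h3⟩
        · rintro (h | ⟨_, h1, h2, h3⟩)
          · exact absurd h hv
          · rw [← hσ'ne v hv, ← hσ'ne _ (hbne h1)] at h3
            exact ⟨h1, h2, h3⟩
  have hu₀D : u₀ ∉ desCells μ (IndOf lt2) σ := by
    intro hmem
    simp only [desCells, Finset.mem_filter] at hmem
    obtain ⟨_, _, hind⟩ := hmem
    have hbeq : ((u₀.1 - 1 : ℕ), u₀.2) = ((r - 1 : ℕ), j) := rfl
    rw [hbeq] at hind
    have := (ind_ge (x := σ u₀)
      (by rw [hxa, hgs]; exact nb_ge _ hv₀c (by omega))).mp hind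
    rw [hx2] at this
    exact Bool.noConfusion this
  have hwD : w ∈ cells μ → w ∈ desCells μ (IndOf lt2) σ := by
    intro hw
    have hbw : ((w.1 - 1 : ℕ), w.2) = u₀ := by
      rw [Prod.ext_iff]; exact ⟨by omega, rfl⟩
    simp only [desCells, Finset.mem_filter]
    refine ⟨hw, ?_, ?_⟩
    · rw [hbw]; exact hu₀c
    · rw [hbw]
      refine (ind_gt (x := σ u₀) (y := σ w) ?_).mpr hx2
      rw [hxa, hgs]
      exact nb_gt w hw (Or.inl (by omega))
  have harm0 : w ∉ cells μ → arm μ w = 0 := by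
    intro hw
    rw [arm, Finset.card_eq_zero, Finset.filter_eq_empty_iff]
    rintro v hv ⟨h1, h2⟩
    apply hw
    obtain ⟨a1, a2, a3, a4⟩ := mem_cells_iff.mp (show (v.1, v.2) ∈ cells μ from hv)
    refine mem_cells_iff.mpr ⟨by omega, by omega, by omega, ?_⟩
    have heq : (r + 1) - 1 = v.1 - 1 := by omega
    rw [heq]
    omega
  have hleg0 : w ∉ cells μ → leg μ u₀ = 0 := by
    intro hw
    rw [leg, Finset.card_eq_zero, Finset.filter_eq_empty_iff]
    rintro v hv ⟨h1, h2⟩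
    apply hw
    obtain ⟨a1, a2, a3, a4⟩ := mem_cells_iff.mp (show (v.1, v.2) ∈ cells μ from hv)
    refine mem_cells_iff.mpr ⟨by omega, by omega, by omega, ?_⟩
    have hmono : μ.getD (v.1 - 1) 0 ≤ μ.getD ((r + 1) - 1) 0 := by
      apply getD_anti hμ.1
      omega
    omega
  have hleg1 : w ∈ cells μ → leg μ u₀ = leg μ w + 1 := by
    intro hw
    rw [leg, leg]
    have hset : (cells μ).filter (fun v => v.2 = u₀.2 ∧ u₀.1 < v.1)
        = insert w ((cells μ).filter fun v => v.2 = w.2 ∧ w.1 < v.1) := by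
      ext v
      simp only [Finset.mem_filter, Finset.mem_insert]
      constructor
      · rintro ⟨h1, h2, h3⟩
        by_cases h4 : v.1 = r + 1
        · left
          rw [Prod.ext_iff]
          exact ⟨by omega, by rw [h2]⟩
        · right
          exact ⟨h1, by rw [h2], by omega⟩
      · rintro (rfl | ⟨h1, h2, h3⟩)
        · exact ⟨hw, rfl, by omega⟩
        · exact ⟨h1, by rw [h2], by omega⟩
    rw [hset, Finset.card_insert_of_notMem]
    simp only [Finset.mem_filter]
    rintro ⟨-, -, h⟩
    omega
  -- the inversion pairs
  set Q : (ℕ × ℕ) × (ℕ × ℕ) → Prop := fun p => p.1 = u₀ ∨ p.2 = u₀ with hQdef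
  have hsame : (invPairs μ (IndOf lt2) σ).filter (fun p => ¬ Q p)
      = (invPairs μ (IndOf lt2) σ').filter (fun p => ¬ Q p) := by
    rw [invPairs, invPairs, Finset.filter_filter, Finset.filter_filter]
    apply Finset.filter_congr
    intro p _
    by_cases hq : Q p
    · simp [hq]
    · have h1 : p.1 ≠ u₀ := fun h => hq (Or.inl h)
      have h2 : p.2 ≠ u₀ := fun h => hq (Or.inr h)
      rw [hσ'ne _ h1, hσ'ne _ h2]
  have hQB : ((cells μ).filter fun v => AttackOrd v u₀).card
      = ((invPairs μ (IndOf lt2) σ).filter Q).card := by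
    apply Finset.card_bij (fun v _ => ((v, u₀) : (ℕ × ℕ) × (ℕ × ℕ)))
    · intro v hv
      obtain ⟨hvc, hAtt⟩ := Finset.mem_filter.mp hv
      have hAtt' : (v.1 = r ∧ v.2 < j) ∨ (v.1 = r + 1 ∧ j < v.2) := hAtt
      have hgt : a < g v := by
        apply nb_gt v hvc
        rcases hAtt' with ⟨h1, h2⟩ | ⟨h1, h2⟩
        · exact Or.inr ⟨h1, h2⟩
        · exact Or.inl (by omega)
      refine Finset.mem_filter.mpr ⟨?_, Or.inr rfl⟩
      refine Finset.mem_filter.mpr ⟨Finset.mem_product.mpr ⟨hvc, hu₀c⟩, hAtt, ?_⟩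
      show IndOf lt2 (σ v) (σ u₀)
      exact (ind_gt (by rw [hxa, hgs]; exact hgt)).mpr hx2
    · intro v₁ h₁ v₂ h₂ heq
      exact congrArg Prod.fst heq
    · intro p hp
      obtain ⟨hpP, hpQ⟩ := Finset.mem_filter.mp hp
      obtain ⟨hprod, hAtt, hInd⟩ := Finset.mem_filter.mp hpP
      obtain ⟨hp1, hp2⟩ := Finset.mem_product.mp hprod
      have hp2u : p.2 = u₀ := by
        rcases hpQ with h | h
        · exfalso
          have hAtt2 : AttackOrd u₀ p.2 := h ▸ hAtt
          have hAtt' : (r = p.2.1 ∧ j < p.2.2) ∨ (r = p.2.1 + 1 ∧ p.2.2 < j) := hAtt2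
          have hge : a ≤ g p.2 := by
            apply nb_ge p.2 hp2
            rcases hAtt' with ⟨h3, -⟩ | ⟨h3, -⟩ <;> omega
          rw [h] at hInd
          have := (ind_ge (x := σ u₀) (y := σ p.2)
            (by rw [hxa, hgs]; exact hge)).mp hInd
          rw [hx2] at this
          exact Bool.noConfusion this
        · exact h
      refine ⟨p.1, Finset.mem_filter.mpr ⟨hp1, ?_⟩, ?_⟩
      · rw [← hp2u]; exact hAtt
      · rw [Prod.ext_iff]; exact ⟨rfl, hp2u.symm⟩
  have hQ'A : ((cells μ).filter fun v => AttackOrd u₀ v).card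
      = ((invPairs μ (IndOf lt2) σ').filter Q).card := by
    apply Finset.card_bij (fun v _ => ((u₀, v) : (ℕ × ℕ) × (ℕ × ℕ)))
    · intro v hv
      obtain ⟨hvc, hAtt⟩ := Finset.mem_filter.mp hv
      have hAtt' : (r = v.1 ∧ j < v.2) ∨ (r = v.1 + 1 ∧ v.2 < j) := hAtt
      have hvne : v ≠ u₀ := by
        intro hveq
        rw [hveq, hu₀1, hu₀2] at hAtt'
        omega
      have hge : a ≤ g v := nb_ge v hvc (by omega)
      refine Finset.mem_filter.mpr ⟨?_, Or.inl rfl⟩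
      refine Finset.mem_filter.mpr ⟨Finset.mem_product.mpr ⟨hu₀c, hvc⟩, hAtt, ?_⟩
      show IndOf lt2 (σ' u₀) (σ' v)
      rw [hσ'ne v hvne]
      exact (ind_ge (by rw [hx'a, hgs]; exact hge)).mpr hx'2
    · intro v₁ h₁ v₂ h₂ heq
      exact congrArg Prod.snd heq
    · intro p hp
      obtain ⟨hpP, hpQ⟩ := Finset.mem_filter.mp hp
      obtain ⟨hprod, hAtt, hInd⟩ := Finset.mem_filter.mp hpP
      obtain ⟨hp1, hp2⟩ := Finset.mem_product.mp hprod
      have hp1u : p.1 = u₀ := by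
        rcases hpQ with h | h
        · exact h
        · by_cases h1 : p.1 = u₀
          · exact h1
          · exfalso
            have hAtt2 : AttackOrd p.1 u₀ := h ▸ hAtt
            have hAtt' : (p.1.1 = r ∧ p.1.2 < j) ∨ (p.1.1 = r + 1 ∧ j < p.1.2) := hAtt2
            have hgt : a < g p.1 := by
              apply nb_gt p.1 hp1
              rcases hAtt' with ⟨h3, h4⟩ | ⟨h3, h4⟩
              · exact Or.inr ⟨h3, h4⟩
              · exact Or.inl (by omega)
            rw [h, hσ'ne p.1 h1] at hInd
            have := (ind_gt (x := σ' u₀) (y := σ p.1)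
              (by rw [hx'a, hgs]; exact hgt)).mp hInd
            rw [hx'2] at this
            exact Bool.noConfusion this
      refine ⟨p.2, Finset.mem_filter.mpr ⟨hp2, ?_⟩, ?_⟩
      · rw [← hp1u]; exact hAtt
      · rw [Prod.ext_iff]; exact ⟨hp1u.symm, rfl⟩
  have hBcard : ((cells μ).filter fun v => AttackOrd v u₀).card
      = ((cells μ).filter fun v => v.1 = r ∧ v.2 < j).card + arm μ w := by
    have h1 : ((cells μ).filter fun v => AttackOrd v u₀)
        = ((cells μ).filter fun v => (v.1 = r ∧ v.2 < j) ∨ (v.1 = w.1 ∧ w.2 < v.2)) := by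
      apply Finset.filter_congr
      intro v _
      constructor
      · intro hAtt
        exact (hAtt : (v.1 = r ∧ v.2 < j) ∨ (v.1 = r + 1 ∧ j < v.2))
      · intro h
        exact (h : (v.1 = r ∧ v.2 < j) ∨ (v.1 = r + 1 ∧ j < v.2))
    rw [h1, Finset.filter_or, Finset.card_union_of_disjoint, arm]
    rw [Finset.disjoint_left]
    rintro p hp1 hp2
    obtain ⟨-, ha1', -⟩ := Finset.mem_filter.mp hp1
    obtain ⟨-, ha2', -⟩ := Finset.mem_filter.mp hp2
    omega
  have hAcard : ((cells μ).filter fun v => AttackOrd u₀ v).card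
      = arm μ u₀ + ((cells μ).filter fun v => v.1 = r - 1 ∧ v.2 < j).card := by
    have harmu : arm μ u₀ = ((cells μ).filter fun v => v.1 = r ∧ j < v.2).card := rfl
    have h1 : ((cells μ).filter fun v => AttackOrd u₀ v)
        = ((cells μ).filter fun v => (v.1 = r ∧ j < v.2) ∨ (v.1 = r - 1 ∧ v.2 < j)) := by
      apply Finset.filter_congr
      intro v _
      constructor
      · intro hAtt
        have h' : (r = v.1 ∧ j < v.2) ∨ (r = v.1 + 1 ∧ v.2 < j) := hAtt
        rcases h' with ⟨h1, h2⟩ | ⟨h1, h2⟩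
        · exact Or.inl ⟨h1.symm, h2⟩
        · exact Or.inr ⟨by omega, h2⟩
      · intro h'
        show (r = v.1 ∧ j < v.2) ∨ (r = v.1 + 1 ∧ v.2 < j)
        rcases h' with ⟨h1, h2⟩ | ⟨h1, h2⟩
        · exact Or.inl ⟨h1.symm, h2⟩
        · exact Or.inr ⟨by omega, h2⟩
    rw [h1, Finset.filter_or, Finset.card_union_of_disjoint, harmu]
    rw [Finset.disjoint_left]
    rintro p hp1 hp2
    obtain ⟨-, ha1', -⟩ := Finset.mem_filter.mp hp1
    obtain ⟨-, ha2', -⟩ := Finset.mem_filter.mp hp2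
    omega
  have hLD : ((cells μ).filter fun v => v.1 = r ∧ v.2 < j).card
      = ((cells μ).filter fun v => v.1 = r - 1 ∧ v.2 < j).card := by
    apply Finset.card_bij (fun v _ => (((r - 1 : ℕ), v.2) : ℕ × ℕ))
    · intro v hv
      obtain ⟨hvc, hv1, hv2⟩ := Finset.mem_filter.mp hv
      refine Finset.mem_filter.mpr ⟨?_, rfl, hv2⟩
      have hvr : ((r : ℕ), v.2) ∈ cells μ := by
        rw [← hv1]; exact hvc
      exact cell_mono_row hμ hvr (by omega) (by omega)
    · intro v₁ h₁ v₂ h₂ heq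
      obtain ⟨-, h₁1, -⟩ := Finset.mem_filter.mp h₁
      obtain ⟨-, h₂1, -⟩ := Finset.mem_filter.mp h₂
      have h2 : v₁.2 = v₂.2 := (Prod.ext_iff.mp heq).2
      rw [Prod.ext_iff]; exact ⟨by omega, h2⟩
    · intro d hd
      obtain ⟨hdc, hd1, hd2⟩ := Finset.mem_filter.mp hd
      refine ⟨((r : ℕ), d.2), Finset.mem_filter.mpr ⟨?_, rfl, hd2⟩, ?_⟩
      · obtain ⟨b1, b2, b3, b4⟩ := mem_cells_iff.mp (show (d.1, d.2) ∈ cells μ from hdc)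
        exact mem_cells_iff.mpr ⟨by omega, hrL, b3, by omega⟩
      · rw [Prod.ext_iff]
        exact ⟨hd1.symm, rfl⟩
  have hu₀erase : u₀ ∉ (desCells μ (IndOf lt2) σ).erase w :=
    fun hmem => hu₀D (Finset.mem_of_mem_erase hmem)
  have hwnm : w ∉ cells μ → w ∉ desCells μ (IndOf lt2) σ := by
    intro hw hmem
    rw [desCells] at hmem
    exact hw (Finset.mem_filter.mp hmem).1
  refine ⟨hnegpos.1, hnegpos.2, ?_, ?_⟩
  · -- maj
    rw [majStat, majStat, hdes, Finset.sum_insert hu₀erase]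
    by_cases hw : w ∈ cells μ
    · have hsum : (∑ x ∈ (desCells μ (IndOf lt2) σ).erase w, (leg μ x + 1))
          + (leg μ w + 1) = ∑ x ∈ desCells μ (IndOf lt2) σ, (leg μ x + 1) :=
        Finset.sum_erase_add (desCells μ (IndOf lt2) σ) (fun u => leg μ u + 1) (hwD hw)
      have hl := hleg1 hw
      omega
    · rw [Finset.erase_eq_of_notMem (hwnm hw)]
      have hl := hleg0 hw
      omega
  · -- inv
    have hsamec : ((invPairs μ (IndOf lt2) σ).filter (fun p => ¬ Q p)).card
        = ((invPairs μ (IndOf lt2) σ').filter (fun p => ¬ Q p)).card := by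
      rw [hsame]
    have hPs := Finset.card_filter_add_card_filter_not
      (s := invPairs μ (IndOf lt2) σ) (p := Q)
    have hP's := Finset.card_filter_add_card_filter_not
      (s := invPairs μ (IndOf lt2) σ') (p := Q)
    rw [invStat, invStat, hdes, Finset.sum_insert hu₀erase]
    by_cases hw : w ∈ cells μ
    · have hsum : (∑ x ∈ (desCells μ (IndOf lt2) σ).erase w, arm μ x) + arm μ w
          = ∑ x ∈ desCells μ (IndOf lt2) σ, arm μ x :=
        Finset.sum_erase_add (desCells μ (IndOf lt2) σ) (fun u => arm μ u) (hwD hw)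
      omega
    · have h0 := harm0 hw
      rw [Finset.erase_eq_of_notMem (hwnm hw)]
      omega

lemma key2 (μ : List ℕ) (hμ : IsPartitionList μ) {N : ℕ}
    (f : {u // u ∈ cells μ} → Fin N × Bool)
    (hf : ¬ ∀ u ∈ cells μ, u.1 ≤ sAbs (superFill μ f u)) :
    (negCount μ (superFill μ (invol μ f)) + negCount μ (superFill μ f)) % 2 = 1 ∧
    invStat μ (IndOf lt2) (superFill μ (invol μ f)) =
      invStat μ (IndOf lt2) (superFill μ f) ∧
    posCount μ (superFill μ (invol μ f)) + majStat μ (IndOf lt2) (superFill μ (invol μ f))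
      = posCount μ (superFill μ f) + majStat μ (IndOf lt2) (superFill μ f) := by
  have hne : (vset μ (gsf μ f)).Nonempty := by
    push_neg at hf
    obtain ⟨u, hu, hlt⟩ := hf
    exact ⟨u, Finset.mem_filter.mpr ⟨hu, hlt⟩⟩
  by_cases hpos : (superFill μ f (cOf μ (gsf μ f))).2 = false
  · obtain ⟨h1, h2, h3, h4⟩ := key_toggle μ hμ f hne hpos
    exact ⟨by omega, h4, by omega⟩
  · have hgeq : gsf μ (invol μ f) = gsf μ f := gsf_toggle μ f _
    have hne' : (vset μ (gsf μ (invol μ f))).Nonempty := by rw [hgeq]; exact hne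
    have hcc : cOf μ (gsf μ f) ∈ cells μ := (Finset.mem_filter.mp (cOf_mem hne).1).1
    have hpos' : (superFill μ (invol μ f) (cOf μ (gsf μ (invol μ f)))).2 = false := by
      rw [show cOf μ (gsf μ (invol μ f)) = cOf μ (gsf μ f) from by rw [hgeq]]
      rw [show superFill μ (invol μ f) (cOf μ (gsf μ f))
          = ((superFill μ f (cOf μ (gsf μ f))).1, !(superFill μ f (cOf μ (gsf μ f))).2)
          from superFill_toggle_self f hcc]
      simp only [Bool.not_eq_false] at hpos
      simp [hpos]
    obtain ⟨h1, h2, h3, h4⟩ := key_toggle μ hμ (invol μ f) hne' hpos'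
    rw [invol_invol] at h1 h2 h3 h4
    exact ⟨by omega, h4.symm, by omega⟩

end Cancellation

/-- With the order `<₂` on the super alphabet,
`Σ_σ (−1)^{m(σ)} q^{inv(σ)} t^{p(σ)+maj(σ)} x^{|σ|}` over all super fillings
`σ : dg(μ) → A` with `|σ(u)| ≤ N` equals the same sum restricted to those `σ`
with `|σ(u)| ≥ i` for every cell `u = (i,j)`. -/
theorem phi_cancellation_to_row_bounded (μ : List ℕ) (hμ : IsPartitionList μ)
    (N : ℕ) (hN : 1 ≤ N) :
    ∑ f : {u // u ∈ cells μ} → Fin N × Bool,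
      ((-1 : MvPolynomial (Fin N) (MvPolynomial (Fin 2) ℤ)) ^ negCount μ (superFill μ f) *
        C ((X 0 : MvPolynomial (Fin 2) ℤ) ^ invStat μ (IndOf lt2) (superFill μ f) *
           (X 1 : MvPolynomial (Fin 2) ℤ) ^
              (posCount μ (superFill μ f) + majStat μ (IndOf lt2) (superFill μ f))) *
        ∏ u, X ((f u).1))
    = ∑ f ∈ Finset.univ.filter (fun f : {u // u ∈ cells μ} → Fin N × Bool =>
          ∀ u ∈ cells μ, u.1 ≤ sAbs (superFill μ f u)),
        ((-1 : MvPolynomial (Fin N) (MvPolynomial (Fin 2) ℤ)) ^ negCount μ (superFill μ f) *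
          C ((X 0 : MvPolynomial (Fin 2) ℤ) ^ invStat μ (IndOf lt2) (superFill μ f) *
             (X 1 : MvPolynomial (Fin 2) ℤ) ^
                (posCount μ (superFill μ f) + majStat μ (IndOf lt2) (superFill μ f))) *
          ∏ u, X ((f u).1)) := by
  have hsplit := Finset.sum_filter_add_sum_filter_not Finset.univ
    (fun f : {u // u ∈ cells μ} → Fin N × Bool =>
      ∀ u ∈ cells μ, u.1 ≤ sAbs (superFill μ f u))
    (fun f : {u // u ∈ cells μ} → Fin N × Bool =>
      ((-1 : MvPolynomial (Fin N) (MvPolynomial (Fin 2) ℤ)) ^ negCount μ (superFill μ f) *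
        C ((X 0 : MvPolynomial (Fin 2) ℤ) ^ invStat μ (IndOf lt2) (superFill μ f) *
           (X 1 : MvPolynomial (Fin 2) ℤ) ^
              (posCount μ (superFill μ f) + majStat μ (IndOf lt2) (superFill μ f))) *
        ∏ u, X ((f u).1)))
  rw [← hsplit]
  have hzero : ∑ f ∈ Finset.univ.filter (fun f : {u // u ∈ cells μ} → Fin N × Bool =>
      ¬ ∀ u ∈ cells μ, u.1 ≤ sAbs (superFill μ f u)),
      ((-1 : MvPolynomial (Fin N) (MvPolynomial (Fin 2) ℤ)) ^ negCount μ (superFill μ f) *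
        C ((X 0 : MvPolynomial (Fin 2) ℤ) ^ invStat μ (IndOf lt2) (superFill μ f) *
           (X 1 : MvPolynomial (Fin 2) ℤ) ^
              (posCount μ (superFill μ f) + majStat μ (IndOf lt2) (superFill μ f))) *
        ∏ u, X ((f u).1)) = 0 := by
    apply Finset.sum_involution (fun f _ => invol μ f)
    · intro f hf
      have hnp := (Finset.mem_filter.mp hf).2
      obtain ⟨hpar, hinv, hpm⟩ := key2 μ hμ f hnp
      have hprod : (∏ u, (X ((invol μ f u).1) : MvPolynomial (Fin N) (MvPolynomial (Fin 2) ℤ)))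
          = ∏ u, X ((f u).1) :=
        Finset.prod_congr rfl (fun u _ => by rw [invol_fst])
      rw [hinv, hpm, hprod]
      have hsign : (-1 : MvPolynomial (Fin N) (MvPolynomial (Fin 2) ℤ))
            ^ negCount μ (superFill μ (invol μ f))
          = - (-1) ^ negCount μ (superFill μ f) := by
        rcases Nat.even_or_odd (negCount μ (superFill μ f)) with he | ho
        · have ho' : Odd (negCount μ (superFill μ (invol μ f))) := by
            rw [Nat.odd_iff]
            rw [Nat.even_iff] at he
            omega
          obtain ⟨k, hk⟩ := ho'
          obtain ⟨l, hl⟩ := he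
          rw [hk, hl, pow_succ, pow_mul, pow_add, ← mul_pow]
          norm_num
        · have he' : Even (negCount μ (superFill μ (invol μ f))) := by
            rw [Nat.even_iff]
            rw [Nat.odd_iff] at ho
            omega
          obtain ⟨k, hk⟩ := ho
          obtain ⟨l, hl⟩ := he'
          rw [hk, hl, pow_succ, pow_mul, pow_add, ← mul_pow]
          norm_num
      rw [hsign]
      ring
    · intro f hf _
      have hnp := (Finset.mem_filter.mp hf).2
      have hne : (vset μ (gsf μ f)).Nonempty := by
        push_neg at hnp
        obtain ⟨u, hu, hlt⟩ := hnp
        exact ⟨u, Finset.mem_filter.mpr ⟨hu, hlt⟩⟩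
      exact invol_ne μ f ((Finset.mem_filter.mp (cOf_mem hne).1).1)
    · intro f hf
      have hnp := (Finset.mem_filter.mp hf).2
      refine Finset.mem_filter.mpr ⟨Finset.mem_univ _, ?_⟩
      intro hP
      apply hnp
      intro u hu
      have h := hP u hu
      rwa [show sAbs (superFill μ (invol μ f) u) = sAbs (superFill μ f u) from
        congrFun (gsf_toggle μ f _) u] at h
    · intro f hf
      exact invol_invol μ f
  rw [hzero, add_zero]

end HHL
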